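/- Let P be a stochastic matrix on a finite state space S of size n, where each row of P either is a point mass or places probability 1/2 on each of two states, and all entries lie in {0, 1/2, 1}. Let T ⊆ S be absorbing. Then for every s ∈ S, the probability h(s) of eventually reaching T from s (the minimal solution in [0,1]^S of h(s)=1 for s∈T and h(s)=∑_t P(s,t)h(t) otherwise) is a rational number expressible as p/q with natural numbers p, q ≤ 4^{n−1}. -/

import Mathlib

open Finset

/-- Escape rank: `Esc Q k s` means within `k` steps (along positive
entries of `Q`) one can reach a state with row sum `< 1`. -/
def Esc {m : Type*} [Fintype m] (Q : Matrix m m ℝ) : ℕ → m → Prop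
  | 0, s => ∑ u, Q s u < 1
  | (k+1), s => Esc Q k s ∨ ∃ u, 0 < Q s u ∧ Esc Q k u

/-- Discrete maximum principle: a subinvariant function for a nonnegative
substochastic matrix all of whose states can escape is nonpositive. -/
lemma subinv_nonpos {m : Type*} [Fintype m] [DecidableEq m] (Q : Matrix m m ℝ)
    (hQ0 : ∀ a b, 0 ≤ Q a b) (hQ1 : ∀ a, ∑ u, Q a u ≤ 1)
    (hesc : ∀ s, ∃ k, Esc Q k s)
    (y : m → ℝ) (hy : ∀ s, y s ≤ ∑ u, Q s u * y u) : ∀ s, y s ≤ 0 := by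
  by_contra hc
  push_neg at hc
  obtain ⟨s0, hs0⟩ := hc
  have hne : (Finset.univ : Finset m).Nonempty := ⟨s0, mem_univ s0⟩
  obtain ⟨sm, -, hsm⟩ := Finset.exists_max_image Finset.univ y hne
  set M := y sm with hM
  have hMpos : 0 < M := lt_of_lt_of_le hs0 (hsm s0 (mem_univ s0))
  have key : ∀ k s, Esc Q k s → y s < M := by
    intro k
    induction k with
    | zero =>
      intro s hs
      have h1 : y s ≤ ∑ u, Q s u * y u := hy s
      have h2 : ∑ u, Q s u * y u ≤ ∑ u, Q s u * M := by
        refine Finset.sum_le_sum (fun u _ => ?_)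
        exact mul_le_mul_of_nonneg_left (hsm u (mem_univ u)) (hQ0 s u)
      have h3 : ∑ u, Q s u * M = (∑ u, Q s u) * M := by rw [Finset.sum_mul]
      have h4 : (∑ u, Q s u) * M < 1 * M :=
        mul_lt_mul_of_pos_right hs hMpos
      linarith
    | succ k ih =>
      intro s hs
      rcases hs with hs | ⟨u, hQu, hu⟩
      · exact ih s hs
      · have hyu : y u < M := ih u hu
        have h1 : y s ≤ ∑ v, Q s v * y v := hy s
        have h2 : ∑ v, Q s v * y v =
            Q s u * y u + ∑ v ∈ Finset.univ.erase u, Q s v * y v := by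
          rw [← Finset.add_sum_erase _ _ (mem_univ u)]
        have h3 : ∑ v ∈ Finset.univ.erase u, Q s v * y v ≤
            ∑ v ∈ Finset.univ.erase u, Q s v * M := by
          refine Finset.sum_le_sum (fun v _ => ?_)
          exact mul_le_mul_of_nonneg_left (hsm v (mem_univ v)) (hQ0 s v)
        have h4 : ∑ v ∈ Finset.univ.erase u, Q s v ≤ 1 - Q s u := by
          have := hQ1 s
          rw [← Finset.add_sum_erase _ _ (mem_univ u)] at this
          linarith
        have h5 : ∑ v ∈ Finset.univ.erase u, Q s v * M ≤ (1 - Q s u) * M := by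
          rw [← Finset.sum_mul]
          exact mul_le_mul_of_nonneg_right h4 (le_of_lt hMpos)
        have h6 : Q s u * y u < Q s u * M := by
          exact mul_lt_mul_of_pos_left hyu hQu
        nlinarith
  obtain ⟨k, hk⟩ := hesc sm
  exact absurd (key k sm hk) (lt_irrefl M)

/-- `|det B| ≤ ∏ rows (ℓ¹ norm)`. -/
lemma abs_det_le_prod_sum_abs {m : Type*} [Fintype m] [DecidableEq m]
    (B : Matrix m m ℤ) : |B.det| ≤ ∏ i, ∑ j, |B i j| := by
  have h1 : |B.det| ≤ ∑ σ : Equiv.Perm m, ∏ i, |B i (σ i)| := by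
    rw [← Matrix.det_transpose, Matrix.det_apply]
    refine le_trans (Finset.abs_sum_le_sum_abs _ _) ?_
    refine Finset.sum_le_sum (fun σ _ => ?_)
    have habs : |Equiv.Perm.sign σ • (∏ i, B.transpose (σ i) i)| = |(∏ i, B i (σ i))| := by
      rcases Int.units_eq_one_or (Equiv.Perm.sign σ) with h | h <;>
        · rw [h]; simp [Matrix.transpose_apply]
    rw [habs, Finset.abs_prod]
  refine le_trans h1 ?_
  have h2 : ∏ i, ∑ j, |B i j| = ∑ f : m → m, ∏ i, |B i (f i)| :=
    Fintype.prod_sum _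
  rw [h2]
  have hinj : Function.Injective (fun σ : Equiv.Perm m => (σ : m → m)) :=
    fun a b hab => Equiv.coe_fn_injective hab
  calc ∑ σ : Equiv.Perm m, ∏ i, |B i (σ i)|
      = ∑ f ∈ Finset.univ.image (fun σ : Equiv.Perm m => (σ : m → m)),
          ∏ i, |B i (f i)| := by
        rw [Finset.sum_image (fun a _ b _ hab => hinj hab)]
    _ ≤ ∑ f : m → m, ∏ i, |B i (f i)| := by
        refine Finset.sum_le_sum_of_subset_of_nonneg (Finset.subset_univ _) ?_
        intro f _ _
        exact Finset.prod_nonneg (fun i _ => abs_nonneg _)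

section Main

variable {n : ℕ} (P : Fin n → Fin n → ℝ) (T : Finset (Fin n))

/-- Reachability of the target set along positive-probability edges. -/
def Reach (s : Fin n) : Prop :=
  ∃ t ∈ T, Relation.ReflTransGen (fun a b => 0 < P a b) s t

open scoped Classical in
/-- The set of states outside `T` from which `T` is reachable. -/
noncomputable def Wfin : Finset (Fin n) :=
  Finset.univ.filter (fun s => s ∉ T ∧ Reach P T s)

lemma mem_Wfin {s : Fin n} : s ∈ Wfin P T ↔ s ∉ T ∧ Reach P T s := by
  classical
  simp [Wfin]

/-- The substochastic matrix restricted to `Wfin`. -/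
noncomputable def QW : Matrix (↥(Wfin P T)) (↥(Wfin P T)) ℝ :=
  fun a b => P (a : Fin n) (b : Fin n)

/-- One-step probability of entering `T` (defined for all states). -/
noncomputable def cWr' : Fin n → ℝ := fun a => ∑ t ∈ T, P a t

/-- One-step probability of entering `T`. -/
noncomputable def cWr : ↥(Wfin P T) → ℝ := fun a => cWr' P T (a : Fin n)

variable (hst0 : ∀ s t, 0 ≤ P s t) (hst1 : ∀ s, ∑ t, P s t = 1)

include hst0 hst1 in
lemma QW_row_plus_c (a : ↥(Wfin P T)) :
    (∑ u, QW P T a u) + cWr P T a ≤ 1 := by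
  classical
  have hdisj : Disjoint (Wfin P T) T := by
    rw [Finset.disjoint_left]
    intro x hx hxT
    exact ((mem_Wfin P T).1 hx).1 hxT
  have h1 : ∑ u, QW P T a u = ∑ u ∈ Wfin P T, P (a : Fin n) u :=
    Finset.sum_coe_sort (Wfin P T) (fun u => P (a : Fin n) u)
  rw [h1]
  have h2 : ∑ u ∈ Wfin P T, P (a : Fin n) u + ∑ t ∈ T, P (a : Fin n) t
      = ∑ u ∈ Wfin P T ∪ T, P (a : Fin n) u :=
    (Finset.sum_union hdisj).symm
  rw [cWr, cWr', h2, ← hst1 (a : Fin n)]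
  exact Finset.sum_le_sum_of_subset_of_nonneg (Finset.subset_univ _)
    (fun i _ _ => hst0 _ i)

include hst0 hst1 in
lemma QW_rowsum (a : ↥(Wfin P T)) : ∑ u, QW P T a u ≤ 1 := by
  have := QW_row_plus_c P T hst0 hst1 a
  have hc : 0 ≤ cWr P T a := Finset.sum_nonneg (fun t _ => hst0 _ t)
  linarith

include hst0 hst1 in
lemma QW_esc : ∀ s : ↥(Wfin P T), ∃ k, Esc (QW P T) k s := by
  have claim : ∀ t ∈ T, ∀ s : Fin n,
      Relation.ReflTransGen (fun a b => 0 < P a b) s t →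
      ∀ (hs : s ∈ Wfin P T), ∃ k, Esc (QW P T) k ⟨s, hs⟩ := by
    intro t htT s hpath
    induction hpath using Relation.ReflTransGen.head_induction_on with
    | refl => exact fun hs => absurd htT (fun h => ((mem_Wfin P T).1 hs).1 h)
    | @head a b hab hpath ih =>
      intro ha
      by_cases hbT : b ∈ T
      · refine ⟨0, ?_⟩
        show ∑ u, QW P T ⟨a, ha⟩ u < 1
        have hbW : b ∉ Wfin P T := fun hbW => ((mem_Wfin P T).1 hbW).1 hbT
        have h1 : ∑ u, QW P T ⟨a, ha⟩ u = ∑ u ∈ Wfin P T, P a u :=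
          Finset.sum_coe_sort (Wfin P T) (fun u => P a u)
        have h2 : ∑ u ∈ insert b (Wfin P T), P a u ≤ 1 := by
          rw [← hst1 a]
          exact Finset.sum_le_sum_of_subset_of_nonneg (Finset.subset_univ _)
            (fun i _ _ => hst0 a i)
        rw [Finset.sum_insert hbW] at h2
        rw [h1]
        linarith
      · have hbW : b ∈ Wfin P T := (mem_Wfin P T).2 ⟨hbT, ⟨t, htT, hpath⟩⟩
        obtain ⟨k, hk⟩ := ih hbW
        exact ⟨k + 1, Or.inr ⟨⟨b, hbW⟩, hab, hk⟩⟩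
  rintro ⟨s, hs⟩
  obtain ⟨hsT, t, htT, hpath⟩ := (mem_Wfin P T).1 hs
  exact claim t htT s hpath hs

omit hst0 in
lemma partition_sum (s : Fin n) (f : Fin n → ℝ)
    (hfT : ∀ t ∈ T, f t = 1) (hfC : ∀ t, t ∉ T → t ∉ Wfin P T → f t = 0) :
    ∑ t, P s t * f t = cWr' P T s + ∑ u : ↥(Wfin P T), P s (u : Fin n) * f u := by
  classical
  have hsub : Wfin P T ⊆ Tᶜ := by
    intro x hx
    rw [Finset.mem_compl]
    exact ((mem_Wfin P T).1 hx).1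
  have hsplit : ∑ t ∈ T, (P s t * f t) + ∑ t ∈ Tᶜ, (P s t * f t)
      = ∑ t, P s t * f t := T.sum_add_sum_compl _
  have hTpart : ∑ t ∈ T, P s t * f t = cWr' P T s := by
    rw [cWr']
    exact Finset.sum_congr rfl (fun t ht => by rw [hfT t ht, mul_one])
  have hsdiff : ∑ t ∈ Tᶜ \ Wfin P T, (P s t * f t) + ∑ t ∈ Wfin P T, (P s t * f t)
      = ∑ t ∈ Tᶜ, P s t * f t := Finset.sum_sdiff hsub
  have hzero : ∑ t ∈ Tᶜ \ Wfin P T, (P s t * f t) = 0 := by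
    refine Finset.sum_eq_zero (fun t ht => ?_)
    rw [Finset.mem_sdiff, Finset.mem_compl] at ht
    rw [hfC t ht.1 ht.2, mul_zero]
  have hW : ∑ u : ↥(Wfin P T), P s (u : Fin n) * f u
      = ∑ t ∈ Wfin P T, P s t * f t :=
    Finset.sum_coe_sort (Wfin P T) (fun t => P s t * f t)
  rw [← hsplit, hTpart, ← hsdiff, hzero, hW]
  ring

/-- The restricted matrix `I - Q`. -/
noncomputable def AW : Matrix (↥(Wfin P T)) (↥(Wfin P T)) ℝ :=
  1 - QW P T

include hst0 hst1 in
lemma AW_mulVec_eq_zero {v : ↥(Wfin P T) → ℝ}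
    (hv : (AW P T).mulVec v = 0) : v = 0 := by
  classical
  have hQv : ∀ s, v s = ∑ u, QW P T s u * v u := by
    intro s
    have := congrFun hv s
    rw [AW, Matrix.sub_mulVec, Matrix.one_mulVec] at this
    have h2 : v s - (QW P T).mulVec v s = 0 := this
    rw [Matrix.mulVec, dotProduct] at h2
    linarith [h2]
  have habs : ∀ s, |v s| ≤ ∑ u, QW P T s u * |v u| := by
    intro s
    rw [hQv s]
    refine le_trans (Finset.abs_sum_le_sum_abs _ _) ?_
    refine Finset.sum_le_sum (fun u _ => ?_)
    have habs : |QW P T s u| = QW P T s u := abs_of_nonneg (hst0 _ _)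
    rw [abs_mul, habs]
  have := subinv_nonpos (QW P T) (fun a b => hst0 _ _)
    (QW_rowsum P T hst0 hst1) (QW_esc P T hst0 hst1)
    (fun s => |v s|) habs
  funext s
  exact abs_eq_zero.1 (le_antisymm (this s) (abs_nonneg _))

include hst0 hst1 in
lemma AW_det_ne_zero : (AW P T).det ≠ 0 := by
  classical
  intro hdet
  obtain ⟨v, hv0, hv⟩ := (Matrix.exists_mulVec_eq_zero_iff).2 hdet
  exact hv0 (AW_mulVec_eq_zero P T hst0 hst1 hv)

/-- The candidate value vector on `Wfin`. -/
noncomputable def yW : ↥(Wfin P T) → ℝ :=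
  (AW P T)⁻¹.mulVec (cWr P T)

include hst0 hst1 in
lemma yW_eq : (AW P T).mulVec (yW P T) = cWr P T := by
  classical
  rw [yW, Matrix.mulVec_mulVec,
    Matrix.mul_nonsing_inv _
      (isUnit_iff_ne_zero.2 (AW_det_ne_zero P T hst0 hst1)),
    Matrix.one_mulVec]

include hst0 hst1 in
lemma yW_fix : ∀ s, yW P T s = (∑ u, QW P T s u * yW P T u) + cWr P T s := by
  intro s
  have := congrFun (yW_eq P T hst0 hst1) s
  rw [AW, Matrix.sub_mulVec, Matrix.one_mulVec] at this
  have h2 : yW P T s - (QW P T).mulVec (yW P T) s = cWr P T s := this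
  rw [Matrix.mulVec, dotProduct] at h2
  linarith [h2]

include hst0 hst1 in
lemma yW_le_one : ∀ s, yW P T s ≤ 1 := by
  intro s
  have key := subinv_nonpos (QW P T) (fun a b => hst0 _ _)
    (QW_rowsum P T hst0 hst1) (QW_esc P T hst0 hst1)
    (fun u => yW P T u - 1) ?_
  · linarith [key s]
  · intro a
    show yW P T a - 1 ≤ ∑ u, QW P T a u * (yW P T u - 1)
    have hfix := yW_fix P T hst0 hst1 a
    have hrc := QW_row_plus_c P T hst0 hst1 a
    have hexp : ∑ u, QW P T a u * (yW P T u - 1)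
        = (∑ u, QW P T a u * yW P T u) - ∑ u, QW P T a u := by
      rw [← Finset.sum_sub_distrib]
      exact Finset.sum_congr rfl (fun u _ => by ring)
    rw [hexp]
    linarith

include hst0 hst1 in
lemma yW_nonneg : ∀ s, 0 ≤ yW P T s := by
  intro s
  have key := subinv_nonpos (QW P T) (fun a b => hst0 _ _)
    (QW_rowsum P T hst0 hst1) (QW_esc P T hst0 hst1)
    (fun u => - yW P T u) ?_
  · linarith [key s]
  · intro a
    show - yW P T a ≤ ∑ u, QW P T a u * (- yW P T u)
    have hfix := yW_fix P T hst0 hst1 a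
    have hc : 0 ≤ cWr P T a := Finset.sum_nonneg (fun t _ => hst0 _ t)
    have hexp : ∑ u, QW P T a u * (- yW P T u)
        = - ∑ u, QW P T a u * yW P T u := by
      rw [← Finset.sum_neg_distrib]
      exact Finset.sum_congr rfl (fun u _ => by ring)
    rw [hexp]
    linarith

open scoped Classical in
/-- Integer version of `2 * P`. -/
noncomputable def NZ : Fin n → Fin n → ℤ :=
  fun s t => if P s t = 0 then 0 else if P s t = 1 / 2 then 1 else 2

variable (hvals : ∀ s t, P s t = 0 ∨ P s t = 1/2 ∨ P s t = 1)

include hvals in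
lemma NZ_cast : ∀ s t, ((NZ P s t : ℤ) : ℝ) = 2 * P s t := by
  classical
  intro s t
  rcases hvals s t with h | h | h
  · simp [NZ, h]
  · have h0 : P s t ≠ 0 := by rw [h]; norm_num
    simp [NZ, h0, h]
  · have h0 : P s t ≠ 0 := by rw [h]; norm_num
    have h12 : P s t ≠ 1 / 2 := by rw [h]; norm_num
    simp [NZ, h0, h12, h]

lemma NZ_nonneg : ∀ s t, 0 ≤ NZ P s t := by
  classical
  intro s t
  rw [NZ]
  split <;> [norm_num; skip]
  split <;> norm_num

lemma NZ_le_two : ∀ s t, NZ P s t ≤ 2 := by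
  classical
  intro s t
  rw [NZ]
  split <;> [norm_num; skip]
  split <;> norm_num

/-- Integer version of `2 * AW`. -/
noncomputable def BZ : Matrix (↥(Wfin P T)) (↥(Wfin P T)) ℤ :=
  fun a b => (if a = b then 2 else 0) - NZ P (a : Fin n) (b : Fin n)

/-- Integer version of `2 * cWr`. -/
noncomputable def cZ : ↥(Wfin P T) → ℤ :=
  fun a => ∑ t ∈ T, NZ P (a : Fin n) t

include hvals in
lemma BZ_cast : (BZ P T).map (Int.cast : ℤ → ℝ) = (2 : ℝ) • AW P T := by
  classical
  ext a b
  simp only [Matrix.map_apply, BZ, AW, Matrix.smul_apply, Matrix.sub_apply,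
    Matrix.one_apply, QW, smul_eq_mul]
  push_cast
  rw [NZ_cast P hvals]
  by_cases hab : a = b <;> simp [hab] <;> ring

include hvals in
lemma cZ_cast : ∀ a, ((cZ P T a : ℤ) : ℝ) = 2 * cWr P T a := by
  intro a
  rw [cZ, cWr, cWr']
  push_cast
  rw [Finset.mul_sum]
  exact Finset.sum_congr rfl (fun t _ => NZ_cast P hvals _ t)

include hst0 hst1 hvals in
lemma cramer_key : ∀ s : ↥(Wfin P T),
    ((BZ P T).det : ℝ) * yW P T s
      = (((BZ P T).adjugate.mulVec (cZ P T)) s : ℝ) := by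
  classical
  intro s
  set M : Matrix (↥(Wfin P T)) (↥(Wfin P T)) ℝ := (BZ P T).map (Int.cast : ℤ → ℝ) with hM
  have hMv : M.mulVec (yW P T) = fun u => ((cZ P T u : ℤ) : ℝ) := by
    rw [hM, BZ_cast P T hvals, Matrix.smul_mulVec, yW_eq P T hst0 hst1]
    funext u
    rw [cZ_cast P T hvals u]
    simp
  have hadj : M.adjugate.mulVec (M.mulVec (yW P T)) = M.det • yW P T := by
    rw [Matrix.mulVec_mulVec, Matrix.adjugate_mul, Matrix.smul_mulVec,
      Matrix.one_mulVec]
  have hdet : M.det = ((BZ P T).det : ℝ) :=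
    (RingHom.map_det (Int.castRingHom ℝ) (BZ P T)).symm
  have hadjmap : M.adjugate = ((BZ P T).adjugate).map (Int.cast : ℤ → ℝ) :=
    (RingHom.map_adjugate (Int.castRingHom ℝ) (BZ P T)).symm
  have hcastvec : ((BZ P T).adjugate.map (Int.cast : ℤ → ℝ)).mulVec
      (fun u => ((cZ P T u : ℤ) : ℝ))
      = fun u => (((BZ P T).adjugate.mulVec (cZ P T)) u : ℝ) := by
    funext u
    rw [Matrix.mulVec, dotProduct, Matrix.mulVec, dotProduct]
    push_cast
    exact Finset.sum_congr rfl (fun v _ => by rw [Matrix.map_apply])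
  have h2 : M.adjugate.mulVec (fun u => ((cZ P T u : ℤ) : ℝ)) = M.det • yW P T := by
    rw [← hMv]; exact hadj
  rw [hadjmap, hcastvec, hdet] at h2
  have h3 := congrFun h2 s
  simp only [Pi.smul_apply, smul_eq_mul] at h3
  rw [← h3]

include hst0 hst1 hvals in
lemma BZ_det_ne_zero : (BZ P T).det ≠ 0 := by
  classical
  intro h0
  have hcast : (((BZ P T).det : ℤ) : ℝ) = ((2 : ℝ) • AW P T).det := by
    rw [← BZ_cast P T hvals]
    exact RingHom.map_det (Int.castRingHom ℝ) (BZ P T)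
  rw [h0] at hcast
  rw [Matrix.det_smul] at hcast
  have hA := AW_det_ne_zero P T hst0 hst1
  have h2 : (2 : ℝ) ^ Fintype.card ↥(Wfin P T) ≠ 0 := by positivity
  simp only [Int.cast_zero] at hcast
  exact hA (by
    field_simp at hcast
    rcases mul_eq_zero.mp hcast.symm with h | h
    · exact absurd h h2
    · exact h)

include hst0 hst1 hvals in
lemma BZ_det_bound : |(BZ P T).det| ≤ 4 ^ (Wfin P T).card := by
  classical
  refine le_trans (abs_det_le_prod_sum_abs _) ?_
  have hrow : ∀ a : ↥(Wfin P T), ∑ b, |BZ P T a b| ≤ 4 := by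
    intro a
    have hpt : ∀ b : ↥(Wfin P T), |BZ P T a b|
        ≤ (if a = b then 2 - NZ P (a : Fin n) (b : Fin n) else 0)
          + NZ P (a : Fin n) (b : Fin n) := by
      intro b
      rw [BZ]
      by_cases hab : a = b
      · rw [if_pos hab, if_pos hab, abs_of_nonneg (by linarith [NZ_le_two P (a : Fin n) (b : Fin n)])]
        linarith [NZ_nonneg P (a : Fin n) (b : Fin n)]
      · rw [if_neg hab, if_neg hab, zero_sub, abs_neg,
          abs_of_nonneg (NZ_nonneg P _ _)]
        linarith
    refine le_trans (Finset.sum_le_sum (fun b _ => hpt b)) ?_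
    rw [Finset.sum_add_distrib, Finset.sum_ite_eq _ a
      (fun b => 2 - NZ P (a : Fin n) (b : Fin n)), if_pos (mem_univ a)]
    have hNZsum : ∑ b : ↥(Wfin P T), NZ P (a : Fin n) (b : Fin n) ≤ 2 := by
      have hcast : ((∑ b : ↥(Wfin P T), NZ P (a : Fin n) (b : Fin n) : ℤ) : ℝ)
          = ∑ b : ↥(Wfin P T), 2 * P (a : Fin n) (b : Fin n) := by
        push_cast
        exact Finset.sum_congr rfl (fun b _ => NZ_cast P hvals _ _)
      have hQ : ∑ b : ↥(Wfin P T), 2 * P (a : Fin n) (b : Fin n) ≤ 2 := by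
        rw [← Finset.mul_sum]
        have := QW_rowsum P T hst0 hst1 a
        have h2 : ∑ b : ↥(Wfin P T), P (a : Fin n) (b : Fin n) ≤ 1 := this
        linarith
      have : ((∑ b : ↥(Wfin P T), NZ P (a : Fin n) (b : Fin n) : ℤ) : ℝ) ≤ ((2 : ℤ) : ℝ) := by
        rw [hcast]; exact_mod_cast hQ
      exact_mod_cast this
    linarith [NZ_nonneg P (a : Fin n) (a : Fin n)]
  calc ∏ a : ↥(Wfin P T), ∑ b, |BZ P T a b|
      ≤ ∏ a : ↥(Wfin P T), (4 : ℤ) := by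
        refine Finset.prod_le_prod (fun a _ => ?_) (fun a _ => hrow a)
        exact Finset.sum_nonneg (fun b _ => abs_nonneg _)
    _ = 4 ^ (Wfin P T).card := by
        rw [Finset.prod_const, Finset.card_univ, Fintype.card_coe]

open scoped Classical in
/-- The candidate minimal solution on all states. -/
noncomputable def gfun : Fin n → ℝ :=
  fun s => if s ∈ T then 1 else if hs : s ∈ Wfin P T then yW P T ⟨s, hs⟩ else 0

lemma gfun_T {s : Fin n} (hs : s ∈ T) : gfun P T s = 1 := by
  classical
  simp [gfun, hs]

lemma gfun_W {s : Fin n} (hs : s ∈ Wfin P T) : gfun P T s = yW P T ⟨s, hs⟩ := by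
  classical
  have hsT : s ∉ T := ((mem_Wfin P T).1 hs).1
  simp [gfun, hsT, hs]

lemma gfun_C {s : Fin n} (hsT : s ∉ T) (hsW : s ∉ Wfin P T) : gfun P T s = 0 := by
  classical
  simp [gfun, hsT, hsW]

include hst0 hst1 in
lemma gfun_bd : ∀ s, 0 ≤ gfun P T s ∧ gfun P T s ≤ 1 := by
  intro s
  by_cases hsT : s ∈ T
  · rw [gfun_T P T hsT]; norm_num
  by_cases hsW : s ∈ Wfin P T
  · rw [gfun_W P T hsW]
    exact ⟨yW_nonneg P T hst0 hst1 _, yW_le_one P T hst0 hst1 _⟩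
  · rw [gfun_C P T hsT hsW]; norm_num

include hst0 hst1 in
lemma gfun_fix : ∀ s ∉ T, gfun P T s = ∑ t, P s t * gfun P T t := by
  intro s hsT
  have hpart := partition_sum P T s (gfun P T) (fun t ht => gfun_T P T ht)
    (fun t ht1 ht2 => gfun_C P T ht1 ht2)
  by_cases hsW : s ∈ Wfin P T
  · rw [gfun_W P T hsW, hpart, yW_fix P T hst0 hst1 ⟨s, hsW⟩]
    have : ∀ u : ↥(Wfin P T), P s (u : Fin n) * gfun P T (u : Fin n)
        = QW P T ⟨s, hsW⟩ u * yW P T u := by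
      intro u
      rw [gfun_W P T u.2]
      congr 1
    rw [Finset.sum_congr rfl (fun u _ => this u)]
    have hc : cWr P T ⟨s, hsW⟩ = cWr' P T s := rfl
    rw [← hc]
    ring
  · rw [gfun_C P T hsT hsW]
    symm
    refine Finset.sum_eq_zero (fun t _ => ?_)
    rcases eq_or_lt_of_le (hst0 s t) with hP | hP
    · rw [← hP, zero_mul]
    · have htT : t ∉ T := by
        intro htT
        exact hsW ((mem_Wfin P T).2 ⟨hsT, ⟨t, htT, Relation.ReflTransGen.single hP⟩⟩)
      have htW : t ∉ Wfin P T := by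
        intro htW
        obtain ⟨-, t', ht', hpath⟩ := (mem_Wfin P T).1 htW
        exact hsW ((mem_Wfin P T).2 ⟨hsT, ⟨t', ht', hpath.head hP⟩⟩)
      rw [gfun_C P T htT htW, mul_zero]

end Main

theorem stmt11 (n : ℕ) (hn : 0 < n) (P : Fin n → Fin n → ℝ)
    (hstoch : ∀ s, (∀ t, 0 ≤ P s t) ∧ ∑ t, P s t = 1)
    (hrow : ∀ s, (∃ t, P s t = 1 ∧ ∀ u, u ≠ t → P s u = 0) ∨
      (∃ t u, t ≠ u ∧ P s t = 1/2 ∧ P s u = 1/2 ∧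
        ∀ w, w ≠ t → w ≠ u → P s w = 0))
    (T : Finset (Fin n)) (habs : ∀ s ∈ T, P s s = 1)
    (h : Fin n → ℝ)
    (hbd : ∀ s, 0 ≤ h s ∧ h s ≤ 1)
    (hT : ∀ s ∈ T, h s = 1)
    (hfix : ∀ s ∉ T, h s = ∑ t, P s t * h t)
    (hmin : ∀ g : Fin n → ℝ, (∀ s, 0 ≤ g s ∧ g s ≤ 1) → (∀ s ∈ T, g s = 1) →
      (∀ s ∉ T, g s = ∑ t, P s t * g t) → ∀ s, h s ≤ g s) :
    ∀ s, ∃ p q : ℕ, q ≠ 0 ∧ p ≤ 4 ^ (n - 1) ∧ q ≤ 4 ^ (n - 1) ∧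
      h s = (p : ℝ) / (q : ℝ) := by
  classical
  have hst0 : ∀ s t, 0 ≤ P s t := fun s => (hstoch s).1
  have hst1 : ∀ s, ∑ t, P s t = 1 := fun s => (hstoch s).2
  have hvals : ∀ s t, P s t = 0 ∨ P s t = 1/2 ∨ P s t = 1 := by
    intro s t
    rcases hrow s with ⟨t0, h1, h0⟩ | ⟨t0, u0, hne, h12a, h12b, h0⟩
    · by_cases ht : t = t0
      · subst ht; exact Or.inr (Or.inr h1)
      · exact Or.inl (h0 t ht)
    · by_cases ht : t = t0
      · subst ht; exact Or.inr (Or.inl h12a)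
      by_cases hu : t = u0
      · subst hu; exact Or.inr (Or.inl h12b)
      · exact Or.inl (h0 t ht hu)
  -- the candidate solution is above h
  have hle : ∀ s, h s ≤ gfun P T s :=
    hmin _ (gfun_bd P T hst0 hst1) (fun s hs => gfun_T P T hs)
      (gfun_fix P T hst0 hst1)
  -- h vanishes outside T and Wfin
  have hC : ∀ s, s ∉ T → s ∉ Wfin P T → h s = 0 := by
    intro s hsT hsW
    have h1 := hle s
    rw [gfun_C P T hsT hsW] at h1
    exact le_antisymm h1 (hbd s).1
  -- h restricted to Wfin solves the same linear system as yW
  have hWsol : (AW P T).mulVec (fun u : ↥(Wfin P T) => h (u : Fin n)) = cWr P T := by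
    rw [AW, Matrix.sub_mulVec, Matrix.one_mulVec]
    funext u
    have huT : (u : Fin n) ∉ T := ((mem_Wfin P T).1 u.2).1
    have hpart := partition_sum P T (u : Fin n) h hT hC
    have hfu := hfix (u : Fin n) huT
    rw [hpart] at hfu
    show h (u : Fin n)
        - ((QW P T).mulVec (fun v : ↥(Wfin P T) => h (v : Fin n))) u = cWr P T u
    rw [Matrix.mulVec, dotProduct]
    have hc : cWr P T u = cWr' P T (u : Fin n) := rfl
    rw [hc]
    have hQs : ∑ v : ↥(Wfin P T), QW P T u v * h (v : Fin n)
        = ∑ v : ↥(Wfin P T), P (u : Fin n) (v : Fin n) * h (v : Fin n) := rfl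
    rw [hQs]
    linarith [hfu]
  have hWy : ∀ u : ↥(Wfin P T), h (u : Fin n) = yW P T u := by
    have hker : (fun u : ↥(Wfin P T) => h (u : Fin n) - yW P T u) = 0 := by
      apply AW_mulVec_eq_zero P T hst0 hst1
      have : (fun u : ↥(Wfin P T) => h (u : Fin n) - yW P T u)
          = (fun u : ↥(Wfin P T) => h (u : Fin n)) - yW P T := rfl
      rw [this, Matrix.mulVec_sub, hWsol, yW_eq P T hst0 hst1, sub_self]
    intro u
    have := congrFun hker u
    simp only [Pi.zero_apply] at this
    linarith [this]
  -- now produce the rational witnesses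
  intro s
  by_cases hsT : s ∈ T
  · refine ⟨1, 1, one_ne_zero, Nat.one_le_pow _ _ (by norm_num),
      Nat.one_le_pow _ _ (by norm_num), ?_⟩
    rw [hT s hsT]; norm_num
  by_cases hsW : s ∈ Wfin P T
  · -- main case
    have hTne : T.Nonempty := by
      obtain ⟨-, t, htT, -⟩ := (mem_Wfin P T).1 hsW
      exact ⟨t, htT⟩
    have hcard : (Wfin P T).card ≤ n - 1 := by
      have hsub : Wfin P T ⊆ Tᶜ := by
        intro x hx
        rw [Finset.mem_compl]
        exact ((mem_Wfin P T).1 hx).1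
      have h1 : (Wfin P T).card ≤ Tᶜ.card := Finset.card_le_card hsub
      have h2 : Tᶜ.card = n - T.card := by
        rw [Finset.card_compl, Fintype.card_fin]
      have h3 : 1 ≤ T.card := Finset.card_pos.2 hTne
      omega
    set D : ℤ := (BZ P T).det with hD
    set e : ℤ := ((BZ P T).adjugate.mulVec (cZ P T)) ⟨s, hsW⟩ with he
    have hDne : D ≠ 0 := BZ_det_ne_zero P T hst0 hst1 hvals
    have hkey : (D : ℝ) * h s = (e : ℝ) := by
      have := cramer_key P T hst0 hst1 hvals ⟨s, hsW⟩
      rw [← hWy ⟨s, hsW⟩] at this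
      exact this
    have hDR : (D : ℝ) ≠ 0 := Int.cast_ne_zero.2 hDne
    have hhs : h s = (e : ℝ) / (D : ℝ) := by
      field_simp
      linarith [hkey]
    refine ⟨e.natAbs, D.natAbs, Int.natAbs_ne_zero.2 hDne, ?_, ?_, ?_⟩
    · -- p ≤ 4^(n-1) : via p ≤ q
      have habs : |e| ≤ |D| := by
        have h1 : |(e : ℝ)| ≤ |(D : ℝ)| := by
          rw [← hkey, abs_mul]
          have := abs_of_nonneg (hbd s).1
          calc |(D : ℝ)| * |h s| ≤ |(D : ℝ)| * 1 := by
                refine mul_le_mul_of_nonneg_left ?_ (abs_nonneg _)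
                rw [this]; exact (hbd s).2
            _ = |(D : ℝ)| := mul_one _
        exact_mod_cast h1
      have hq : |D| ≤ (4 : ℤ) ^ (n - 1) := by
        refine le_trans (BZ_det_bound P T hst0 hst1 hvals) ?_
        exact pow_le_pow_right₀ (by norm_num) hcard
      have : |e| ≤ (4 : ℤ) ^ (n - 1) := le_trans habs hq
      have h2 : (e.natAbs : ℤ) ≤ ((4 ^ (n - 1) : ℕ) : ℤ) := by
        rw [Int.abs_eq_natAbs] at this
        exact_mod_cast this
      exact_mod_cast h2
    · have hq : |D| ≤ (4 : ℤ) ^ (n - 1) := by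
        refine le_trans (BZ_det_bound P T hst0 hst1 hvals) ?_
        exact pow_le_pow_right₀ (by norm_num) hcard
      have h2 : (D.natAbs : ℤ) ≤ ((4 ^ (n - 1) : ℕ) : ℤ) := by
        rw [Int.abs_eq_natAbs] at hq
        exact_mod_cast hq
      exact_mod_cast h2
    · rw [hhs]
      have h1 : ((e.natAbs : ℕ) : ℝ) = |(e : ℝ)| := by
        rw [Nat.cast_natAbs, Int.cast_abs]
      have h2 : ((D.natAbs : ℕ) : ℝ) = |(D : ℝ)| := by
        rw [Nat.cast_natAbs, Int.cast_abs]
      rw [h1, h2, ← abs_div]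
      symm
      apply abs_of_nonneg
      rw [← hhs]
      exact (hbd s).1
  · refine ⟨0, 1, one_ne_zero, by norm_num, Nat.one_le_pow _ _ (by norm_num), ?_⟩
    rw [hC s hsT hsW]
    norm_num
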